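/- Let A be a finite-dimensional k-algebra and f : X → M a morphism of finite-dimensional right A-modules. Then f is right minimal if and only if every section s : X' → X (i.e., split monomorphism) with f ∘ s = 0 satisfies s = 0. -/

import Mathlib

universe u

/-- A morphism `f : X → M` of modules is *right minimal* if every endomorphism `h` of `X`
with `f ∘ h = f` is an automorphism. -/
def RightMinimal {R X M : Type*} [Ring R] [AddCommGroup X] [Module R X]
    [AddCommGroup M] [Module R M] (f : X →ₗ[R] M) : Prop :=
  ∀ h : X →ₗ[R] X, f.comp h = f → Function.Bijective h

/-- `f : X → M` is right minimal iff every section `s : X' → X` (split monomorphism)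
with `f ∘ s = 0` is zero. -/
theorem rightMinimal_iff_section_zero
    {k : Type u} {A : Type u} [Field k] [Ring A] [Algebra k A] [FiniteDimensional k A]
    {X M : Type u}
    [AddCommGroup X] [Module Aᵐᵒᵖ X] [Module k X] [IsScalarTower k Aᵐᵒᵖ X]
    [FiniteDimensional k X]
    [AddCommGroup M] [Module Aᵐᵒᵖ M] [Module k M] [IsScalarTower k Aᵐᵒᵖ M]
    [FiniteDimensional k M]
    (f : X →ₗ[Aᵐᵒᵖ] M) :
    RightMinimal f ↔
      ∀ (X' : Type u) [AddCommGroup X'] [Module Aᵐᵒᵖ X'] [Module k X']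
        [IsScalarTower k Aᵐᵒᵖ X'] [FiniteDimensional k X'] (s : X' →ₗ[Aᵐᵒᵖ] X),
        (∃ r : X →ₗ[Aᵐᵒᵖ] X', r.comp s = LinearMap.id) → f.comp s = 0 → s = 0 := by
  constructor
  · intro hmin X' _ _ _ _ _ s ⟨r, hr⟩ hfs
    set h : X →ₗ[Aᵐᵒᵖ] X := LinearMap.id - s.comp r with hh
    have hfh : f.comp h = f := by
      rw [hh, LinearMap.comp_sub, LinearMap.comp_id, ← LinearMap.comp_assoc, hfs,
        LinearMap.zero_comp, sub_zero]
    have hbij := hmin h hfh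
    ext x
    have : h (s x) = 0 := by
      simp only [hh, LinearMap.sub_apply, LinearMap.id_apply, LinearMap.comp_apply]
      have : r (s x) = x := congrArg (· x) hr
      rw [this, sub_self]
    have := hbij.injective (by rw [this, map_zero] : h (s x) = h 0)
    simpa using this
  · intro hsec h hfh
    -- Fitting decomposition
    have hart : IsArtinian Aᵐᵒᵖ X := isArtinian_of_tower k inferInstance
    have hnoe : IsNoetherian Aᵐᵒᵖ X := isNoetherian_of_tower k inferInstance
    obtain ⟨n, hn⟩ := Filter.eventually_atTop.mp (h.eventually_isCompl_ker_pow_range_pow)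
    have hcompl := hn (n + 1) (Nat.le_succ n)
    set p := LinearMap.ker (h ^ (n + 1)) with hp
    set q := LinearMap.range (h ^ (n + 1)) with hq
    have hfh' : ∀ x, f (h x) = f x := fun x => congrArg (· x) hfh
    -- f ∘ h ^ m = f pointwise
    have hfpow : ∀ (m : ℕ) (x : X), f ((h ^ m) x) = f x := by
      intro m
      induction m with
      | zero => intro x; simp
      | succ m ih =>
        intro x
        rw [pow_succ, Module.End.mul_apply, ih (h x), hfh' x]
    haveI : FiniteDimensional k (LinearMap.ker (h ^ (n + 1))) :=
      inferInstanceAs (FiniteDimensional k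
        ((LinearMap.ker (h ^ (n + 1))).restrictScalars k))
    -- the inclusion of p is a section killed by f
    have hfs : f.comp p.subtype = 0 := by
      ext ⟨x, hx⟩
      have hx0 : (h ^ (n + 1)) x = 0 := hx
      have := hfpow (n + 1) x
      rw [hx0, map_zero] at this
      simpa using this.symm
    have hsz := hsec p p.subtype
      ⟨Submodule.linearProjOfIsCompl p q hcompl, by
        ext x; exact congrArg Subtype.val (Submodule.projectionOnto_apply_left hcompl x)⟩ hfs
    -- hence p = ⊥, so h is injective
    have hpbot : p = ⊥ := by
      rw [Submodule.eq_bot_iff]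
      intro x hx
      have := congrArg (· (⟨x, hx⟩ : p)) hsz
      simpa using this
    have hker : LinearMap.ker h = ⊥ := by
      rw [Submodule.eq_bot_iff]
      intro x hx
      have hx' : x ∈ p := by
        show (h ^ (n + 1)) x = 0
        rw [pow_succ, Module.End.mul_apply, hx, map_zero]
      rw [hpbot] at hx'
      exact hx'
    have hinj : Function.Injective h := by
      rwa [← LinearMap.ker_eq_bot]
    -- injective endomorphism of a finite-dimensional space is surjective
    have hk : Function.Injective (h.restrictScalars k) := hinj
    have hsurj : Function.Surjective (h.restrictScalars k) :=
      (LinearMap.injective_iff_surjective).mp hk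
    exact ⟨hinj, hsurj⟩
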